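/- arXiv:1805.01827 — 2 statements merged into one kernel-verified Lean document; each statement's English description precedes it below -/
import Mathlib

section
/- Let m, n ≥ 2 and let Γ be the one-vertex interface gluing of the complete graphs K_m and K_n at any chosen vertices v_m ∈ K_m and v_n ∈ K_n (a graph on m + n − 1 vertices). Then the characteristic polynomial of the Laplacian L of Γ is det(L − λ·1) = (−1)^{m+n−1} · λ · (λ−m)^{m−2} · (λ−n)^{n−2} · (λ−1) · (λ−(m+n−1)), as polynomials in λ over ℝ. -/
open Polynomial

open scoped Classical

/-- `det (M - λ·1)`, the characteristic determinant of a square real matrix,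
as a polynomial in `λ`. -/
noncomputable def charDet {n : Type*} [Fintype n] [DecidableEq n] (M : Matrix n n ℝ) :
    ℝ[X] :=
  (M.map C - (X : ℝ[X]) • 1).det

/-- The one-vertex interface gluing of `G₁` and `G₂` at `(v₁, v₂)`:
the graph on `V₁ ⊕ {x : V₂ // x ≠ v₂}` identifying `v₁` with `v₂`. -/
def interfaceGlueOne {V₁ V₂ : Type*} (G₁ : SimpleGraph V₁) (G₂ : SimpleGraph V₂)
    (v₁ : V₁) (v₂ : V₂) : SimpleGraph (V₁ ⊕ {x : V₂ // x ≠ v₂}) where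
  Adj x y :=
    match x, y with
    | Sum.inl u, Sum.inl v => G₁.Adj u v
    | Sum.inr u, Sum.inr v => G₂.Adj u v
    | Sum.inl u, Sum.inr v => u = v₁ ∧ G₂.Adj v₂ v
    | Sum.inr u, Sum.inl v => v = v₁ ∧ G₂.Adj v₂ u
  symm := ⟨by
    rintro (u | u) (v | v) h
    · exact G₁.adj_symm h
    · exact h
    · exact h
    · exact G₂.adj_symm h⟩
  loopless := ⟨by
    rintro (u | u) h
    · exact G₁.ne_of_adj h rfl
    · exact G₂.ne_of_adj h rfl⟩

namespace CharDetGlue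

set_option synthInstance.maxHeartbeats 1000000
set_option maxHeartbeats 1000000

open Matrix

section Helpers

variable {K : Type*} [Field K] {ι r : Type*} [Fintype ι] [DecidableEq ι]
  [Fintype r] [DecidableEq r]

lemma det_smul_one_add_mul (a : K) (ha : a ≠ 0) (U : Matrix ι r K) (V : Matrix r ι K) :
    Matrix.det (a • (1 : Matrix ι ι K) + U * V) =
      a ^ Fintype.card ι * Matrix.det ((1 : Matrix r r K) + a⁻¹ • (V * U)) := by
  have h : a • (1 : Matrix ι ι K) + U * V = a • ((1 : Matrix ι ι K) + U * (a⁻¹ • V)) := by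
    rw [smul_add]
    congr 1
    rw [Matrix.mul_smul, smul_smul, mul_inv_cancel₀ ha, one_smul]
  rw [h, Matrix.det_smul, Matrix.det_one_add_mul_comm, Matrix.smul_mul]

end Helpers

section Degrees

variable (m n : ℕ) (vm : Fin m) (vn : Fin n)

local notation "β" => {x : Fin n // x ≠ vn}
local notation "G" => interfaceGlueOne (⊤ : SimpleGraph (Fin m)) (⊤ : SimpleGraph (Fin n)) vm vn

lemma glue_adj_inl_inl (a a' : Fin m) :
    (G).Adj (Sum.inl a) (Sum.inl a') ↔ a ≠ a' := Iff.rfl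

lemma glue_adj_inr_inr (b b' : β) :
    (G).Adj (Sum.inr b) (Sum.inr b') ↔ (b : Fin n) ≠ (b' : Fin n) := Iff.rfl

lemma glue_adj_inl_inr (a : Fin m) (b : β) :
    (G).Adj (Sum.inl a) (Sum.inr b) ↔ a = vm := by
  constructor
  · rintro ⟨h, _⟩; exact h
  · intro h; exact ⟨h, (Ne.symm b.2 : vn ≠ (b : Fin n))⟩

lemma glue_adj_inr_inl (b : β) (a : Fin m) :
    (G).Adj (Sum.inr b) (Sum.inl a) ↔ a = vm := by
  constructor
  · rintro ⟨h, _⟩; exact h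
  · intro h; exact ⟨h, (Ne.symm b.2 : vn ≠ (b : Fin n))⟩

lemma card_beta : Fintype.card β = n - 1 := by
  simpa using Fintype.card_subtype_compl (fun x : Fin n => x = vn)

lemma deg_inl (u : Fin m) :
    (G).degree (Sum.inl u) = (m - 1) + (if u = vm then n - 1 else 0) := by
  classical
  rw [← SimpleGraph.card_neighborFinset_eq_degree, SimpleGraph.neighborFinset_eq_filter,
    Finset.card_filter]
  rw [Fintype.sum_sum_type]
  have h1 : ∑ v : Fin m, (if (G).Adj (Sum.inl u) (Sum.inl v) then 1 else 0) = m - 1 := by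
    simp only [glue_adj_inl_inl]
    rw [← Finset.card_filter, Finset.filter_ne, Finset.card_erase_of_mem (Finset.mem_univ u)]
    simp
  have h2 : ∑ b : β, (if (G).Adj (Sum.inl u) (Sum.inr b) then 1 else 0)
      = if u = vm then n - 1 else 0 := by
    simp only [glue_adj_inl_inr]
    by_cases h : u = vm <;> simp [h, card_beta]
  rw [h1, h2]

lemma deg_inr (hn : 2 ≤ n) (b : β) : (G).degree (Sum.inr b) = n - 1 := by
  classical
  rw [← SimpleGraph.card_neighborFinset_eq_degree, SimpleGraph.neighborFinset_eq_filter,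
    Finset.card_filter]
  rw [Fintype.sum_sum_type]
  have h1 : ∑ v : Fin m, (if (G).Adj (Sum.inr b) (Sum.inl v) then 1 else 0) = 1 := by
    simp only [glue_adj_inr_inl]
    simp
  have h2 : ∑ b' : β, (if (G).Adj (Sum.inr b) (Sum.inr b') then 1 else 0) = n - 2 := by
    simp only [glue_adj_inr_inr]
    have hiff : ∀ b' : β, ((b : Fin n) ≠ (b' : Fin n)) ↔ b' ≠ b := by
      intro b'; rw [ne_comm]; exact (Subtype.ext_iff).symm.not
    simp only [hiff]
    rw [← Finset.card_filter, Finset.filter_ne', Finset.card_erase_of_mem (Finset.mem_univ b)]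
    rw [Finset.card_univ, card_beta]
    omega
  rw [h1, h2]
  omega

end Degrees

section Blocks

noncomputable abbrev K : Type := RatFunc ℝ

noncomputable def xK : K := algebraMap (Polynomial ℝ) K Polynomial.X

variable (m n : ℕ) (vm : Fin m) (vn : Fin n)

local notation "β" => {x : Fin n // x ≠ vn}

noncomputable def Ablk : Matrix (Fin m) (Fin m) K :=
  Matrix.of fun u v =>
    if u = v then (m : K) - 1 - xK + (if u = vm then (n : K) - 1 else 0) else -1

noncomputable def Bblk : Matrix (Fin m) β K :=
  Matrix.of fun u _ => if u = vm then (-1 : K) else 0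

noncomputable def Cblk : Matrix β (Fin m) K :=
  Matrix.of fun _ u => if u = vm then (-1 : K) else 0

noncomputable def Dblk : Matrix β β K :=
  Matrix.of fun b b' => if b = b' then (n : K) - 1 - xK else -1

noncomputable def invDblk : Matrix β β K :=
  Matrix.of fun b b' =>
    (if b = b' then ((n : K) - xK)⁻¹ else 0) + (((n : K) - xK) * (1 - xK))⁻¹

lemma xK_ne_nat (k : ℕ) : (k : K) - xK ≠ 0 := by
  have h : ((k : Polynomial ℝ) - Polynomial.X) ≠ 0 := by
    intro h
    have := congrArg (fun p => Polynomial.coeff p 1) h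
    simp [Polynomial.coeff_natCast_ite] at this
  have h2 := RatFunc.algebraMap_ne_zero (K := ℝ) h
  simpa [xK, map_sub, map_natCast] using h2

lemma one_sub_xK_ne : (1 : K) - xK ≠ 0 := by simpa using xK_ne_nat 1


local notation "G" => interfaceGlueOne (⊤ : SimpleGraph (Fin m)) (⊤ : SimpleGraph (Fin n)) vm vn

lemma blockEq (hm : 2 ≤ m) (hn : 2 ≤ n) :
    ((((G).lapMatrix ℝ).map C - (X : ℝ[X]) • 1).map (algebraMap ℝ[X] K)) =
      Matrix.fromBlocks (Ablk m n vm) (Bblk m n vm vn) (Cblk m n vm vn) (Dblk n vn) := by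
  have hm1 : (1:ℕ) ≤ m := by omega
  have hn1 : (1:ℕ) ≤ n := by omega
  ext i j
  rcases i with u | b <;> rcases j with v | b'
  · by_cases huv : u = v
    · subst huv
      simp [Matrix.map_apply, Matrix.sub_apply, Matrix.smul_apply, Matrix.one_apply,
        SimpleGraph.lapMatrix, SimpleGraph.degMatrix, SimpleGraph.adjMatrix,
        Matrix.diagonal, deg_inl, Ablk, xK, Nat.cast_sub hm1, Nat.cast_sub hn1,
        apply_ite (fun r : ℕ => (r : ℝ)), apply_ite (fun r : ℝ => C r),
        apply_ite (algebraMap ℝ[X] K)]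
      split_ifs <;> push_cast <;> ring
    · simp [Matrix.map_apply, Matrix.sub_apply, Matrix.smul_apply, Matrix.one_apply,
        SimpleGraph.lapMatrix, SimpleGraph.degMatrix, SimpleGraph.adjMatrix,
        Matrix.diagonal, huv, glue_adj_inl_inl, Ablk]
  · simp [Matrix.map_apply, Matrix.sub_apply, Matrix.smul_apply, Matrix.one_apply,
      SimpleGraph.lapMatrix, SimpleGraph.degMatrix, SimpleGraph.adjMatrix,
      Matrix.diagonal, glue_adj_inl_inr, Bblk, apply_ite (algebraMap ℝ[X] K)]
    split_ifs <;> norm_num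
  · simp [Matrix.map_apply, Matrix.sub_apply, Matrix.smul_apply, Matrix.one_apply,
      SimpleGraph.lapMatrix, SimpleGraph.degMatrix, SimpleGraph.adjMatrix,
      Matrix.diagonal, glue_adj_inr_inl, Cblk, apply_ite (algebraMap ℝ[X] K)]
    split_ifs <;> norm_num
  · by_cases hbb : b = b'
    · subst hbb
      simp [Matrix.map_apply, Matrix.sub_apply, Matrix.smul_apply, Matrix.one_apply,
        SimpleGraph.lapMatrix, SimpleGraph.degMatrix, SimpleGraph.adjMatrix,
        Matrix.diagonal, deg_inr (m := m) (vm := vm) n vn hn, Dblk, xK, Nat.cast_sub hn1]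
    · have : (b : Fin n) ≠ (b' : Fin n) := fun h => hbb (Subtype.ext h)
      simp [Matrix.map_apply, Matrix.sub_apply, Matrix.smul_apply, Matrix.one_apply,
        SimpleGraph.lapMatrix, SimpleGraph.degMatrix, SimpleGraph.adjMatrix,
        Matrix.diagonal, hbb, glue_adj_inr_inr, this, Dblk]

lemma Dblk_mul_invD (hn : 2 ≤ n) : Dblk n vn * invDblk n vn = 1 := by
  have ha : (n : K) - xK ≠ 0 := xK_ne_nat n
  have h1x : (1 : K) - xK ≠ 0 := one_sub_xK_ne
  ext b b'
  rw [Matrix.mul_apply]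
  simp only [Dblk, invDblk, Matrix.of_apply, Matrix.one_apply, mul_add]
  rw [Finset.sum_add_distrib]
  have h1 : ∑ c : β, (if b = c then (n : K) - 1 - xK else -1) * (if c = b' then ((n : K) - xK)⁻¹ else 0)
      = (if b = b' then (n : K) - 1 - xK else -1) * ((n : K) - xK)⁻¹ := by
    simp [mul_ite, Finset.sum_ite_eq']
  have h2 : ∑ c : β, (if b = c then (n : K) - 1 - xK else -1) * (((n : K) - xK) * (1 - xK))⁻¹
      = (((n : K) - xK) - ((n : K) - 1)) * (((n : K) - xK) * (1 - xK))⁻¹ := by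
    have he : ∀ c : β, (if b = c then (n : K) - 1 - xK else -1) = -1 + (if b = c then (n : K) - xK else 0) := by
      intro c; split_ifs <;> ring
    simp only [he, add_mul, Finset.sum_add_distrib, ite_mul, zero_mul, Finset.sum_ite_eq,
      Finset.mem_univ, if_true, Finset.sum_const, Finset.card_univ, card_beta, nsmul_eq_mul]
    have : ((n - 1 : ℕ) : K) = (n : K) - 1 := by
      push_cast [Nat.cast_sub (by omega : 1 ≤ n)]; ring
    rw [this]; ring
  rw [h1, h2]
  split_ifs with h
  · field_simp
    ring
  · field_simp
    ring

lemma detD (hn : 2 ≤ n) :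
    (Dblk n vn).det = ((n : K) - xK) ^ (n - 2) * (1 - xK) := by
  have ha : (n : K) - xK ≠ 0 := xK_ne_nat n
  have hD : Dblk n vn = ((n : K) - xK) • (1 : Matrix β β K) +
      (Matrix.of fun (_ : β) (_ : Fin 1) => (1 : K)) * (Matrix.of fun (_ : Fin 1) (_ : β) => (-1 : K)) := by
    ext b b'
    simp only [Dblk, Matrix.of_apply, Matrix.add_apply, Matrix.smul_apply, Matrix.one_apply,
      Matrix.mul_apply, Fin.sum_univ_one, smul_eq_mul]
    split_ifs <;> ring
  rw [hD, det_smul_one_add_mul _ ha]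
  have hVU : (Matrix.of fun (_ : Fin 1) (_ : β) => (-1 : K)) * (Matrix.of fun (_ : β) (_ : Fin 1) => (1 : K))
      = Matrix.of fun _ _ => -((n : K) - 1) := by
    ext i j
    simp [Matrix.mul_apply, Finset.sum_const, card_beta, nsmul_eq_mul,
      Nat.cast_sub (by omega : 1 ≤ n)]
  rw [hVU]
  rw [Matrix.det_fin_one]
  have hcard : Fintype.card β = n - 1 := card_beta n vn
  obtain ⟨q, rfl⟩ : ∃ q, n = q + 2 := ⟨n - 2, by omega⟩
  rw [hcard]
  simp only [Matrix.add_apply, Matrix.one_apply_eq, Matrix.smul_apply, Matrix.of_apply,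
    smul_eq_mul]
  have hstep : (q + 2 - 1) = (q + 2 - 2) + 1 := by omega
  rw [hstep, pow_succ, mul_assoc]
  congr 1
  have ha' : (q : K) + 2 - xK ≠ 0 := by push_cast at ha; exact ha
  push_cast
  field_simp
  ring

noncomputable def sVal (n : ℕ) : K :=
  ((n : K) - 1) * (((n : K) - xK)⁻¹ + ((n : K) - 1) * (((n : K) - xK) * (1 - xK))⁻¹)

noncomputable def tVal (m n : ℕ) : K := ((n : K) - 1) - sVal n

lemma BDC (hn : 2 ≤ n) :
    Bblk m n vm vn * invDblk n vn * Cblk m n vm vn =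
      Matrix.of fun u w => if u = vm ∧ w = vm then sVal n else 0 := by
  have hcast : ((n - 1 : ℕ) : K) = (n : K) - 1 := by
    push_cast [Nat.cast_sub (by omega : 1 ≤ n)]; ring
  have hBD : Bblk m n vm vn * invDblk n vn = Matrix.of fun u (_ : β) =>
      if u = vm then -(((n : K) - xK)⁻¹ + ((n : K) - 1) * (((n : K) - xK) * (1 - xK))⁻¹) else 0 := by
    ext u b'
    rw [Matrix.mul_apply]
    simp only [Bblk, invDblk, Matrix.of_apply, ite_mul, zero_mul, neg_mul, mul_add,
      Finset.sum_ite_eq]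
    by_cases h : u = vm
    · simp only [h, if_true]
      rw [Finset.sum_add_distrib]
      simp [Finset.sum_ite_eq', Finset.sum_const, Finset.card_univ, card_beta, nsmul_eq_mul,
        hcast]
      ring
    · simp [h]
  rw [hBD]
  ext u w
  rw [Matrix.mul_apply]
  simp only [Matrix.of_apply, Cblk, ite_mul, mul_ite, mul_zero, zero_mul, mul_neg, mul_one,
    Finset.sum_ite_eq]
  by_cases h : u = vm <;> by_cases h' : w = vm <;>
    simp [h, h', Finset.sum_const, Finset.card_univ, card_beta, nsmul_eq_mul, hcast, sVal] <;>
    ring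

noncomputable def U2 : Matrix (Fin m) (Fin 2) K :=
  Matrix.of fun u i => if i = 0 then (1 : K) else if u = vm then 1 else 0

noncomputable def V2 : Matrix (Fin 2) (Fin m) K :=
  Matrix.of fun i v => if i = 0 then (-1 : K) else if v = vm then tVal m n else 0

lemma schur_decomp (hn : 2 ≤ n) :
    Ablk m n vm - Bblk m n vm vn * invDblk n vn * Cblk m n vm vn =
      ((m : K) - xK) • (1 : Matrix (Fin m) (Fin m) K) + U2 m vm * V2 m n vm := by
  rw [BDC m n vm vn hn]
  ext u v
  simp only [Matrix.sub_apply, Matrix.add_apply, Matrix.smul_apply, Matrix.one_apply,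
    Matrix.of_apply, Ablk, U2, V2, Matrix.mul_apply, Fin.sum_univ_two, smul_eq_mul,
    tVal]
  by_cases h : u = v <;> by_cases h1 : u = vm <;> by_cases h2 : v = vm <;>
    simp_all [eq_comm] <;> ring

lemma detS (hm : 2 ≤ m) (hn : 2 ≤ n) :
    (Ablk m n vm - Bblk m n vm vn * invDblk n vn * Cblk m n vm vn).det =
      ((m : K) - xK) ^ (m - 2) *
        ((((m : K) - xK) - (m : K)) * (((m : K) - xK) + tVal m n) + tVal m n) := by
  have hb : (m : K) - xK ≠ 0 := xK_ne_nat m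
  rw [schur_decomp m n vm vn hn, det_smul_one_add_mul _ hb]
  have hVU : V2 m n vm * U2 m vm = Matrix.of fun i j =>
      if i = 0 then (if j = 0 then -(m : K) else -1)
      else (if j = 0 then tVal m n else tVal m n) := by
    ext i j
    rw [Matrix.mul_apply]
    simp only [V2, U2, Matrix.of_apply, ite_mul, mul_ite, mul_one, mul_zero, neg_mul, one_mul,
      mul_neg]
    fin_cases i <;> fin_cases j <;>
      simp [Finset.sum_ite_eq', Finset.sum_const, Finset.card_univ, nsmul_eq_mul]
  rw [hVU, Matrix.det_fin_two]
  simp only [Matrix.add_apply, Matrix.smul_apply, Matrix.of_apply, Matrix.one_apply,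
    smul_eq_mul, Fintype.card_fin]
  norm_num
  obtain ⟨p, rfl⟩ : ∃ p, m = p + 2 := ⟨m - 2, by omega⟩
  have hstep : (p + 2 : ℕ) = (p + 2 - 2) + 2 := by omega
  rw [hstep, pow_add]
  rw [mul_assoc]
  congr 1
  have hb' : (p : K) + 2 - xK ≠ 0 := by push_cast at hb; exact hb
  push_cast
  field_simp
  try ring

end Blocks

end CharDetGlue


theorem charDet_interfaceGlueOne_complete (m n : ℕ) (hm : 2 ≤ m) (hn : 2 ≤ n)
    (vm : Fin m) (vn : Fin n) :
    charDet ((interfaceGlueOne (⊤ : SimpleGraph (Fin m)) (⊤ : SimpleGraph (Fin n))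
        vm vn).lapMatrix ℝ) =
      (-1 : ℝ[X]) ^ (m + n - 1) * X * (X - C (m : ℝ)) ^ (m - 2) *
        (X - C (n : ℝ)) ^ (n - 2) * (X - 1) * (X - C ((m : ℝ) + n - 1)) := by
  classical
  refine IsFractionRing.injective ℝ[X] (RatFunc ℝ) ?_
  rw [charDet, RingHom.map_det, RingHom.mapMatrix_apply, CharDetGlue.blockEq m n vm vn hm hn]
  haveI := invertibleOfRightInverse _ _ (CharDetGlue.Dblk_mul_invD n vn hn)
  rw [Matrix.det_fromBlocks₂₂, invOf_eq_right_inv (CharDetGlue.Dblk_mul_invD n vn hn),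
    CharDetGlue.detD n vn hn, CharDetGlue.detS m n vm vn hm hn]
  simp only [map_mul, map_pow, map_sub, map_one, map_neg, map_natCast, map_add,
    RatFunc.algebraMap_C, RatFunc.algebraMap_X]
  rw [show (RatFunc.X : RatFunc ℝ) = CharDetGlue.xK from (RatFunc.algebraMap_X).symm]
  obtain ⟨p, rfl⟩ : ∃ p, m = p + 2 := ⟨m - 2, by omega⟩
  obtain ⟨q, rfl⟩ : ∃ q, n = q + 2 := ⟨n - 2, by omega⟩
  rw [show p + 2 + (q + 2) - 1 = p + q + 3 from by omega,
    show p + 2 - 2 = p from by omega, show q + 2 - 2 = q from by omega]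
  have han : ((q + 2 : ℕ) : RatFunc ℝ) - CharDetGlue.xK ≠ 0 := CharDetGlue.xK_ne_nat (q + 2)
  have h1x : (1 : RatFunc ℝ) - CharDetGlue.xK ≠ 0 := CharDetGlue.one_sub_xK_ne
  have key : (1 - CharDetGlue.xK) *
      ((((p + 2 : ℕ) : RatFunc ℝ) - CharDetGlue.xK - ((p + 2 : ℕ) : RatFunc ℝ)) *
        (((p + 2 : ℕ) : RatFunc ℝ) - CharDetGlue.xK + CharDetGlue.tVal (p + 2) (q + 2)) +
          CharDetGlue.tVal (p + 2) (q + 2)) =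
      -(CharDetGlue.xK * (CharDetGlue.xK - 1) *
        (CharDetGlue.xK - (((p + 2 : ℕ) : RatFunc ℝ) + ((q + 2 : ℕ) : RatFunc ℝ) - 1))) := by
    simp only [CharDetGlue.tVal, CharDetGlue.sVal]
    have han' : ((q : RatFunc ℝ) + 2) - CharDetGlue.xK ≠ 0 := by push_cast at han; exact han
    push_cast
    field_simp
    ring
  have hsign : ((-1 : RatFunc ℝ)) ^ (p + q + 3) * ((-1 : RatFunc ℝ) ^ p * (-1 : RatFunc ℝ) ^ q)
      = -1 := by
    rw [← pow_add, ← pow_add]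
    exact Odd.neg_one_pow ⟨p + q + 1, by omega⟩
  have hbp : (CharDetGlue.xK - ((p + 2 : ℕ) : RatFunc ℝ)) ^ p
      = (-1 : RatFunc ℝ) ^ p * (((p + 2 : ℕ) : RatFunc ℝ) - CharDetGlue.xK) ^ p := by
    rw [show CharDetGlue.xK - ((p + 2 : ℕ) : RatFunc ℝ)
      = -(((p + 2 : ℕ) : RatFunc ℝ) - CharDetGlue.xK) from by ring, neg_pow]
  have hbq : (CharDetGlue.xK - ((q + 2 : ℕ) : RatFunc ℝ)) ^ q
      = (-1 : RatFunc ℝ) ^ q * (((q + 2 : ℕ) : RatFunc ℝ) - CharDetGlue.xK) ^ q := by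
    rw [show CharDetGlue.xK - ((q + 2 : ℕ) : RatFunc ℝ)
      = -(((q + 2 : ℕ) : RatFunc ℝ) - CharDetGlue.xK) from by ring, neg_pow]
  rw [hbp, hbq, pow_add, pow_add]
  rcases Nat.even_or_odd p with hp | hp <;> rcases Nat.even_or_odd q with hq | hq <;>
    rw [hp.neg_one_pow, hq.neg_one_pow] <;>
    linear_combination
      ((((q + 2 : ℕ) : RatFunc ℝ) - CharDetGlue.xK) ^ q *
        (((p + 2 : ℕ) : RatFunc ℝ) - CharDetGlue.xK) ^ p) * key
end

section
/- Let m, n ≥ 2 and let Γ be the one-edge bridge gluing of the complete graphs K_m and K_n, joining a chosen vertex v_m ∈ K_m to a chosen vertex v_n ∈ K_n by a single new edge (a graph on m + n vertices). Then the characteristic polynomial of the Laplacian L of Γ is det(L − λ·1) = (−1)^{m+n} · λ · (λ−m)^{m−2} · (λ−n)^{n−2} · q(λ), where q(λ) = λ³ − (m+n+2)λ² + (1 + (m+1)(n+1))λ − (m+n), as polynomials in λ over ℝ. -/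
open Polynomial

open scoped Classical

/-- The one-edge bridge gluing of `G₁` and `G₂`: the graph on `V₁ ⊕ V₂` with a single new
edge joining `v₁` to `v₂`. -/
def bridgeGlueOne {V₁ V₂ : Type*} (G₁ : SimpleGraph V₁) (G₂ : SimpleGraph V₂)
    (v₁ : V₁) (v₂ : V₂) : SimpleGraph (V₁ ⊕ V₂) where
  Adj x y :=
    match x, y with
    | Sum.inl u, Sum.inl v => G₁.Adj u v
    | Sum.inr u, Sum.inr v => G₂.Adj u v
    | Sum.inl u, Sum.inr v => u = v₁ ∧ v = v₂
    | Sum.inr u, Sum.inl v => v = v₁ ∧ u = v₂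
  symm := ⟨by
    rintro (u | u) (v | v) h
    · exact G₁.symm.symm _ _ h
    · exact h
    · exact h
    · exact G₂.symm.symm _ _ h⟩
  loopless := ⟨by
    rintro (u | u) h
    · exact G₁.loopless.irrefl u h
    · exact G₂.loopless.irrefl u h⟩

noncomputable section BridgeAux

open Matrix

abbrev KK : Type := FractionRing (Polynomial ℝ)

def phiK : ℝ[X] →+* KK := algebraMap _ _

def xK : KK := phiK X

variable (m n : ℕ) (vm : Fin m) (vn : Fin n)

def dvec : Fin m ⊕ Fin n → KK :=
  Sum.elim (fun _ => (m : KK) - xK) (fun _ => (n : KK) - xK)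

def DM : Matrix (Fin m ⊕ Fin n) (Fin m ⊕ Fin n) KK := Matrix.diagonal (dvec m n)

def DMinv : Matrix (Fin m ⊕ Fin n) (Fin m ⊕ Fin n) KK :=
  Matrix.diagonal (fun i => (dvec m n i)⁻¹)

def u1 : Fin m ⊕ Fin n → KK := Sum.elim (fun _ => 1) (fun _ => 0)
def u2 : Fin m ⊕ Fin n → KK := Sum.elim (fun _ => 0) (fun _ => 1)
def wv : Fin m ⊕ Fin n → KK :=
  Sum.elim (fun a => if a = vm then 1 else 0) (fun b => if b = vn then -1 else 0)

def UM : Matrix (Fin m ⊕ Fin n) (Fin 3) KK :=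
  Matrix.of fun x k => ![u1 m n x, u2 m n x, wv m n vm vn x] k

def VM : Matrix (Fin 3) (Fin m ⊕ Fin n) KK :=
  Matrix.of fun k y => ![-u1 m n y, -u2 m n y, wv m n vm vn y] k

lemma deg_inl (a : Fin m) :
    (((bridgeGlueOne (⊤ : SimpleGraph (Fin m)) (⊤ : SimpleGraph (Fin n)) vm vn).degree
      (Sum.inl a) : ℕ) : ℝ) = (m : ℝ) - 1 + (if a = vm then 1 else 0) := by
  rw [SimpleGraph.degree, SimpleGraph.neighborFinset_eq_filter, Finset.card_filter]
  push_cast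
  rw [Fintype.sum_sum_type]
  have h1 : ∀ b : Fin m,
      (if (bridgeGlueOne (⊤ : SimpleGraph (Fin m)) (⊤ : SimpleGraph (Fin n)) vm vn).Adj
        (Sum.inl a) (Sum.inl b) then (1:ℝ) else 0) = 1 - (if a = b then 1 else 0) := by
    intro b
    simp only [bridgeGlueOne, SimpleGraph.top_adj]
    split_ifs <;> simp_all
  have h2 : ∀ b : Fin n,
      (if (bridgeGlueOne (⊤ : SimpleGraph (Fin m)) (⊤ : SimpleGraph (Fin n)) vm vn).Adj
        (Sum.inl a) (Sum.inr b) then (1:ℝ) else 0) =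
      (if a = vm then 1 else 0) * (if b = vn then 1 else 0) := by
    intro b
    simp only [bridgeGlueOne]
    by_cases ha : a = vm <;> by_cases hb : b = vn <;> simp [ha, hb]
  simp only [h1, h2, Finset.sum_sub_distrib, Finset.sum_const, Finset.card_univ,
    Fintype.card_fin, nsmul_eq_mul, mul_one, Finset.sum_ite_eq, Finset.mem_univ, if_true,
    ← Finset.sum_mul, Finset.sum_ite_eq', mul_ite, mul_one, mul_zero]

lemma deg_inr (b : Fin n) :
    (((bridgeGlueOne (⊤ : SimpleGraph (Fin m)) (⊤ : SimpleGraph (Fin n)) vm vn).degree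
      (Sum.inr b) : ℕ) : ℝ) = (n : ℝ) - 1 + (if b = vn then 1 else 0) := by
  rw [SimpleGraph.degree, SimpleGraph.neighborFinset_eq_filter, Finset.card_filter]
  push_cast
  rw [Fintype.sum_sum_type]
  have h1 : ∀ a : Fin n,
      (if (bridgeGlueOne (⊤ : SimpleGraph (Fin m)) (⊤ : SimpleGraph (Fin n)) vm vn).Adj
        (Sum.inr b) (Sum.inr a) then (1:ℝ) else 0) = 1 - (if b = a then 1 else 0) := by
    intro a
    simp only [bridgeGlueOne, SimpleGraph.top_adj]
    split_ifs <;> simp_all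
  have h2 : ∀ a : Fin m,
      (if (bridgeGlueOne (⊤ : SimpleGraph (Fin m)) (⊤ : SimpleGraph (Fin n)) vm vn).Adj
        (Sum.inr b) (Sum.inl a) then (1:ℝ) else 0) =
      (if b = vn then 1 else 0) * (if a = vm then 1 else 0) := by
    intro a
    simp only [bridgeGlueOne]
    by_cases ha : a = vm <;> by_cases hb : b = vn <;> simp [ha, hb]
  simp only [h1, h2, Finset.sum_sub_distrib, Finset.sum_const, Finset.card_univ,
    Fintype.card_fin, nsmul_eq_mul, mul_one, Finset.sum_ite_eq, Finset.mem_univ, if_true,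
    ← Finset.mul_sum, Finset.sum_ite_eq', mul_ite, mul_one, mul_zero]
  ring

end BridgeAux

section BridgeAux2
open Matrix
variable (m n : ℕ) (vm : Fin m) (vn : Fin n)

set_option maxHeartbeats 1000000 in
lemma lapmap_eq :
    (((bridgeGlueOne (⊤ : SimpleGraph (Fin m)) (⊤ : SimpleGraph (Fin n)) vm vn).lapMatrix ℝ).map C
        - (X : ℝ[X]) • (1 : Matrix (Fin m ⊕ Fin n) (Fin m ⊕ Fin n) ℝ[X])).map phiK =
      DM m n + UM m n vm vn * VM m n vm vn := by
  ext x y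
  have hlap : ∀ x y : Fin m ⊕ Fin n,
      (bridgeGlueOne (⊤ : SimpleGraph (Fin m)) (⊤ : SimpleGraph (Fin n)) vm vn).lapMatrix ℝ x y =
        (if x = y then
          (((bridgeGlueOne (⊤ : SimpleGraph (Fin m)) (⊤ : SimpleGraph (Fin n)) vm vn).degree x : ℕ) : ℝ)
          else 0)
        - (if (bridgeGlueOne (⊤ : SimpleGraph (Fin m)) (⊤ : SimpleGraph (Fin n)) vm vn).Adj x y
            then 1 else 0) := by
    intro x y
    simp [SimpleGraph.lapMatrix, SimpleGraph.degMatrix, Matrix.diagonal_apply, Matrix.sub_apply]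
  simp only [Matrix.map_apply, Matrix.sub_apply, Matrix.smul_apply, Matrix.one_apply,
    smul_eq_mul, hlap, Matrix.add_apply, Matrix.mul_apply, Fin.sum_univ_three,
    DM, UM, VM, Matrix.of_apply, dvec, u1, u2, wv, Matrix.diagonal_apply,
    Matrix.cons_val_zero, Matrix.cons_val_one, Matrix.head_cons, Matrix.cons_val_two,
    Matrix.tail_cons]
  clear hlap
  rcases x with a | a <;> rcases y with b | b
  · simp only [Sum.elim_inl, Sum.inl.injEq, deg_inl m n vm vn a]
    simp only [show ((bridgeGlueOne (⊤ : SimpleGraph (Fin m)) (⊤ : SimpleGraph (Fin n)) vm vn).Adj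
        (Sum.inl a) (Sum.inl b)) ↔ ¬(a = b) from by simp [bridgeGlueOne]]
    split_ifs <;> simp_all [map_sub, map_add, _root_.map_mul, _root_.map_one, map_natCast, _root_.map_zero, xK] <;> ring
  · simp only [Sum.elim_inl, Sum.elim_inr, deg_inl m n vm vn a, reduceCtorEq, if_false]
    simp only [show ((bridgeGlueOne (⊤ : SimpleGraph (Fin m)) (⊤ : SimpleGraph (Fin n)) vm vn).Adj
        (Sum.inl a) (Sum.inr b)) ↔ (a = vm ∧ b = vn) from Iff.rfl]
    split_ifs <;> simp_all [map_sub, map_add, _root_.map_mul, _root_.map_one, map_natCast, _root_.map_zero, xK] <;> ring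
  · simp only [Sum.elim_inl, Sum.elim_inr, deg_inr m n vm vn a, reduceCtorEq, if_false]
    simp only [show ((bridgeGlueOne (⊤ : SimpleGraph (Fin m)) (⊤ : SimpleGraph (Fin n)) vm vn).Adj
        (Sum.inr a) (Sum.inl b)) ↔ (b = vm ∧ a = vn) from Iff.rfl]
    split_ifs <;> simp_all [map_sub, map_add, _root_.map_mul, _root_.map_one, map_natCast, _root_.map_zero, xK] <;> ring
  · simp only [Sum.elim_inr, Sum.inr.injEq, deg_inr m n vm vn a]
    simp only [show ((bridgeGlueOne (⊤ : SimpleGraph (Fin m)) (⊤ : SimpleGraph (Fin n)) vm vn).Adj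
        (Sum.inr a) (Sum.inr b)) ↔ ¬(a = b) from by simp [bridgeGlueOne]]
    split_ifs <;> simp_all [map_sub, map_add, _root_.map_mul, _root_.map_one, map_natCast, _root_.map_zero, xK] <;> ring

end BridgeAux2

section BridgeAux3
open Matrix
variable (m n : ℕ) (vm : Fin m) (vn : Fin n)

lemma det_step (hα : (m : KK) - xK ≠ 0) (hβ : (n : KK) - xK ≠ 0) :
    (DM m n + UM m n vm vn * VM m n vm vn).det =
      ((m : KK) - xK) ^ m * ((n : KK) - xK) ^ n *
        ((1 : Matrix (Fin 3) (Fin 3) KK) + VM m n vm vn * (DMinv m n * UM m n vm vn)).det := by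
  have hd : ∀ i, dvec m n i ≠ 0 := by rintro (a | b); exacts [hα, hβ]
  have h1 : DM m n * DMinv m n = 1 := by
    rw [DM, DMinv, Matrix.diagonal_mul_diagonal]
    rw [show (fun i => dvec m n i * (dvec m n i)⁻¹) = fun _ => (1 : KK) from
      funext fun i => mul_inv_cancel₀ (hd i), Matrix.diagonal_one]
  have key : DM m n + UM m n vm vn * VM m n vm vn =
      DM m n * (1 + DMinv m n * UM m n vm vn * VM m n vm vn) := by
    rw [Matrix.mul_add, Matrix.mul_one, ← Matrix.mul_assoc, ← Matrix.mul_assoc, h1, Matrix.one_mul]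
  rw [key, Matrix.det_mul, Matrix.det_one_add_mul_comm, DM, Matrix.det_diagonal,
    Fintype.prod_sum_type]
  simp only [dvec, Sum.elim_inl, Sum.elim_inr, Finset.prod_const, Finset.card_univ,
    Fintype.card_fin, Matrix.mul_assoc]

lemma small_eq (hα : (m : KK) - xK ≠ 0) (hβ : (n : KK) - xK ≠ 0) :
    (1 : Matrix (Fin 3) (Fin 3) KK) + VM m n vm vn * (DMinv m n * UM m n vm vn) =
      !![1 - (m : KK) * ((m : KK) - xK)⁻¹, 0, -((m : KK) - xK)⁻¹;
         0, 1 - (n : KK) * ((n : KK) - xK)⁻¹, ((n : KK) - xK)⁻¹;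
         ((m : KK) - xK)⁻¹, -((n : KK) - xK)⁻¹,
           1 + ((m : KK) - xK)⁻¹ + ((n : KK) - xK)⁻¹] := by
  have hDU : DMinv m n * UM m n vm vn =
      Matrix.of (fun x l => (dvec m n x)⁻¹ * UM m n vm vn x l) := by
    ext x l; exact Matrix.diagonal_mul _ _ _ _
  rw [hDU]
  ext k l
  rw [Matrix.add_apply, Matrix.mul_apply, Fintype.sum_sum_type]
  simp only [VM, UM, Matrix.of_apply, dvec, u1, u2, wv, Sum.elim_inl, Sum.elim_inr]
  fin_cases k <;> fin_cases l <;>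
    simp [Matrix.one_apply, Finset.sum_ite_eq', Finset.sum_sub_distrib, Finset.sum_const,
      Finset.card_univ, mul_ite, ite_mul, Finset.sum_ite_eq, nsmul_eq_mul] <;> ring

end BridgeAux3

set_option maxHeartbeats 1000000 in
lemma key3' {F : Type*} [Field F] (a b x : F) (hα : a - x ≠ 0) (hβ : b - x ≠ 0) :
    (a - x) ^ 2 * (b - x) ^ 2 *
      (!![1 - a * (a - x)⁻¹, 0, -(a - x)⁻¹;
         0, 1 - b * (b - x)⁻¹, (b - x)⁻¹;
         (a - x)⁻¹, -(b - x)⁻¹, 1 + (a - x)⁻¹ + (b - x)⁻¹]).det =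
      x * (x ^ 3 - (a + b + 2) * x ^ 2 + (1 + (a + 1) * (b + 1)) * x - (a + b)) := by
  have hu : (a - x) * (a - x)⁻¹ = 1 := mul_inv_cancel₀ hα
  have hv : (b - x) * (b - x)⁻¹ = 1 := mul_inv_cancel₀ hβ
  rw [Matrix.det_fin_three]
  simp only [Matrix.of_apply, Matrix.cons_val', Matrix.cons_val_zero, Matrix.cons_val_one,
    Matrix.head_cons, Matrix.cons_val_two, Matrix.tail_cons, Matrix.empty_val',
    Matrix.cons_val_fin_one, Matrix.head_fin_const]
  set u := (a - x)⁻¹ with hu'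
  set v := (b - x)⁻¹ with hv'
  linear_combination (((b - x) ^ 2) + (-(b - x) ^ 2 * x) + (-(b - x) ^ 2 * x * v) + ((b - x) ^ 2 * x ^ 2 * v) + (-(b - x) ^ 3 * v) + ((b - x) ^ 3 * x * v) + ((a - x) * (b - x) ^ 2 * u) + (-(a - x) * (b - x) ^ 2 * x) + (-(a - x) * (b - x) ^ 2 * x * v) + (-(a - x) * (b - x) ^ 2 * x * v ^ 2) + (-(a - x) * (b - x) ^ 2 * x * u) + (-(a - x) * (b - x) ^ 2 * x * u * v) + ((a - x) * (b - x) ^ 2 * x ^ 2 * v) + ((a - x) * (b - x) ^ 2 * x ^ 2 * v ^ 2) + ((a - x) * (b - x) ^ 2 * x ^ 2 * u * v) + (-(a - x) * (b - x) ^ 3 * u * v) + ((a - x) * (b - x) ^ 3 * x * v) + ((a - x) * (b - x) ^ 3 * x * v ^ 2) + ((a - x) * (b - x) ^ 3 * x * u * v) + (-(a - x) ^ 2 * (b - x) ^ 2) + (-(a - x) ^ 2 * (b - x) ^ 2 * v) + (-(a - x) ^ 2 * (b - x) ^ 2 * v ^ 2) + (-(a - x) ^ 2 * (b - x) ^ 2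 * u) + ((a - x) ^ 2 * (b - x) ^ 2 * x * v) + ((a - x) ^ 2 * (b - x) ^ 2 * x * v ^ 2) + ((a - x) ^ 2 * (b - x) ^ 2 * x * u * v) + ((a - x) ^ 2 * (b - x) ^ 3 * v) + ((a - x) ^ 2 * (b - x) ^ 3 * v ^ 2) + ((a - x) ^ 2 * (b - x) ^ 3 * u * v)) * hu + ((-(b - x) * x) + ((b - x) * x ^ 2) + (-(b - x) ^ 2) + ((b - x) ^ 2 * x) + (-(a - x) * x) + ((a - x) * x ^ 2) + (-(a - x) * (b - x) * x * v) + ((a - x) * (b - x) * x ^ 2) + ((a - x) * (b - x) * x ^ 2 * v) + ((a - x) * (b - x) ^ 2 * x) + ((a - x) * (b - x) ^ 2 * x * v)) * hv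

set_option maxHeartbeats 1000000 in
theorem charDet_bridgeGlueOne_complete (m n : ℕ) (hm : 2 ≤ m) (hn : 2 ≤ n)
    (vm : Fin m) (vn : Fin n) :
    charDet ((bridgeGlueOne (⊤ : SimpleGraph (Fin m)) (⊤ : SimpleGraph (Fin n))
        vm vn).lapMatrix ℝ) =
      (-1 : ℝ[X]) ^ (m + n) * X * (X - C (m : ℝ)) ^ (m - 2) * (X - C (n : ℝ)) ^ (n - 2) *
        (X ^ 3 - C ((m : ℝ) + n + 2) * X ^ 2 +
          C (1 + ((m : ℝ) + 1) * ((n : ℝ) + 1)) * X - C ((m : ℝ) + n)) := by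
  have hφ : Function.Injective phiK := IsFractionRing.injective _ _
  apply hφ
  rw [charDet, RingHom.map_det, RingHom.mapMatrix_apply]
  rw [lapmap_eq m n vm vn]
  have hα : (m : KK) - xK ≠ 0 := by
    intro h
    have h3 : (C (m : ℝ) - X : ℝ[X]) = 0 := by
      apply hφ
      rw [map_sub, map_zero]
      simpa [xK, map_natCast] using h
    have := congrArg (fun p : ℝ[X] => p.coeff 1) h3
    simp at this
  have hβ : (n : KK) - xK ≠ 0 := by
    intro h
    have h3 : (C (n : ℝ) - X : ℝ[X]) = 0 := by
      apply hφ
      rw [map_sub, map_zero]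
      simpa [xK, map_natCast] using h
    have := congrArg (fun p : ℝ[X] => p.coeff 1) h3
    simp at this
  rw [det_step m n vm vn hα hβ, small_eq m n vm vn hα hβ]
  have hkey := key3' ((m : KK)) ((n : KK)) xK hα hβ
  obtain ⟨m', rfl⟩ : ∃ m', m = m' + 2 := ⟨m - 2, by omega⟩
  obtain ⟨n', rfl⟩ : ∃ n', n = n' + 2 := ⟨n - 2, by omega⟩
  have hx : phiK X = xK := rfl
  simp only [Nat.add_sub_cancel, map_mul, map_pow, map_sub, map_add, map_neg, map_one,
    map_natCast, map_ofNat, hx]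
  have hflip : ∀ (y z : KK) (k : ℕ), (y - z) ^ k = (-1) ^ k * (z - y) ^ k := by
    intro y z k
    rw [← neg_sub z y, neg_pow]
  have hkey2 : (xK - ((m' + 2 : ℕ) : KK)) ^ 2 * (xK - ((n' + 2 : ℕ) : KK)) ^ 2 *
      (!![1 - ((m' + 2 : ℕ) : KK) * (((m' + 2 : ℕ) : KK) - xK)⁻¹, 0,
            -((((m' + 2 : ℕ) : KK)) - xK)⁻¹;
         0, 1 - ((n' + 2 : ℕ) : KK) * (((n' + 2 : ℕ) : KK) - xK)⁻¹,
            ((((n' + 2 : ℕ) : KK)) - xK)⁻¹;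
         ((((m' + 2 : ℕ) : KK)) - xK)⁻¹, -((((n' + 2 : ℕ) : KK)) - xK)⁻¹,
           1 + ((((m' + 2 : ℕ) : KK)) - xK)⁻¹ + ((((n' + 2 : ℕ) : KK)) - xK)⁻¹]).det =
      xK * (xK ^ 3 - (((m' + 2 : ℕ) : KK) + ((n' + 2 : ℕ) : KK) + 2) * xK ^ 2 +
        (1 + (((m' + 2 : ℕ) : KK) + 1) * (((n' + 2 : ℕ) : KK) + 1)) * xK -
        (((m' + 2 : ℕ) : KK) + ((n' + 2 : ℕ) : KK))) := by
    linear_combination hkey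
  rw [hflip ((m' + 2 : ℕ) : KK) xK (m' + 2), hflip ((n' + 2 : ℕ) : KK) xK (n' + 2)]
  linear_combination ((-1 : KK) ^ (m' + 2) * (-1 : KK) ^ (n' + 2) *
    (xK - ((m' + 2 : ℕ) : KK)) ^ m' * (xK - ((n' + 2 : ℕ) : KK)) ^ n') * hkey2
end
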